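/- arXiv:2511.16583 — 2 statements merged into one kernel-verified Lean document; each statement's English description precedes it below -/
import Mathlib

section
/- Let p and s be distinct primes, d and a natural numbers with d ≥ 1, and let ŷ ∈ GL_d(F_{p^a}) be an element of order s. Then the index [N_{GL_d(p^a)}(⟨ŷ⟩) : C_{GL_d(p^a)}(ŷ)] is at most d. -/
open Polynomial Matrix

lemma aux_charmatrix_map_eval {K : Type*} [Field K] {n : Type*} [Fintype n] [DecidableEq n]
    (M : Matrix n n K) (μ : K) :
    (charmatrix M).map (Polynomial.eval μ) = (algebraMap K (Matrix n n K)) μ - M := by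
  ext i j
  by_cases h : i = j <;>
    simp [h, charmatrix_apply, Matrix.algebraMap_eq_diagonal, Matrix.diagonal,
      Matrix.map_apply, Matrix.sub_apply]

lemma aux_mem_spectrum_iff_isRoot_charpoly {K : Type*} [Field K] {n : Type*} [Fintype n]
    [DecidableEq n] (M : Matrix n n K) (μ : K) :
    μ ∈ spectrum K M ↔ M.charpoly.IsRoot μ := by
  have hdet : M.charpoly.eval μ = ((algebraMap K (Matrix n n K)) μ - M).det := by
    rw [Matrix.charpoly, ← Polynomial.coe_evalRingHom, RingHom.map_det,
      ← aux_charmatrix_map_eval M μ]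
    rfl
  rw [spectrum.mem_iff, IsRoot.def, hdet, Matrix.isUnit_iff_isUnit_det, isUnit_iff_ne_zero,
    not_ne_iff]


/-- Let `p` and `s` be distinct primes, `d ≥ 1`, `a ≥ 1`, and let
`y ∈ GL_d(F_{p^a})` have order `s`. Then `[N_{GL_d(p^a)}(⟨y⟩) : C_{GL_d(p^a)}(y)] ≤ d`. -/
theorem stmt3 (p s d a : ℕ) [Fact p.Prime] (hs : s.Prime) (hps : p ≠ s)
    (hd : 1 ≤ d) (ha : a ≠ 0)
    (y : GL (Fin d) (GaloisField p a)) (hy : orderOf y = s) :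
    (Subgroup.centralizer {y}).relIndex (Subgroup.normalizer (Subgroup.zpowers y : Set (GL (Fin d) (GaloisField p a)))) ≤ d := by
  classical
  haveI : Fact s.Prime := ⟨hs⟩
  have hp : p.Prime := Fact.out
  haveI : Nonempty (Fin d) := ⟨⟨0, hd⟩⟩
  set F := GaloisField p a
  set L := AlgebraicClosure F
  set φ : Matrix (Fin d) (Fin d) F →+* Matrix (Fin d) (Fin d) L := (algebraMap F L).mapMatrix with hφ
  have hφinj : Function.Injective φ := by
    intro A B h
    ext i j
    exact (algebraMap F L).injective (congrFun (congrFun (congrArg Matrix.of.symm h) i) j)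
  set M : Matrix (Fin d) (Fin d) L := φ (y : Matrix (Fin d) (Fin d) F) with hM
  set E : Set L := spectrum L M with hE
  have hEne : E.Nonempty := spectrum.nonempty_of_isAlgClosed_of_finiteDimensional L M
  -- powers of y map to powers of M
  have hpow : ∀ n : ℕ, φ ((y ^ n : GL (Fin d) F) : Matrix (Fin d) (Fin d) F) = M ^ n := by
    intro n
    rw [Units.val_pow_eq_pow_val, map_pow]
  -- y^s = 1 hence M^s = 1
  have hys : y ^ s = 1 := by rw [← hy]; exact pow_orderOf_eq_one y
  have hMs : M ^ s = 1 := by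
    rw [← hpow s, hys]
    simp
  -- every element of E is an s-th root of unity
  have hroot1 : ∀ μ ∈ E, μ ^ s = 1 := by
    intro μ hμ
    have h1 : μ ^ s ∈ spectrum L (M ^ s) :=
      (spectrum.map_pow_of_nonempty hEne s) ▸ Set.mem_image_of_mem _ hμ
    rw [hMs, spectrum.one_eq] at h1
    exact h1
  -- E is contained in the roots of the characteristic polynomial
  have hEroots : E ⊆ (M.charpoly.roots.toFinset : Set L) := by
    intro μ hμ
    have := (aux_mem_spectrum_iff_isRoot_charpoly M μ).mp hμ
    simp only [Finset.coe_sort_coe, Multiset.mem_toFinset, Finset.mem_coe]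
    rw [Polynomial.mem_roots (M.charpoly_monic.ne_zero)]
    exact this
  have hEfin : E.Finite := Set.Finite.subset (Finset.finite_toSet _) hEroots
  haveI : Finite E := hEfin.to_subtype
  -- cardinality bound
  have hcardE : Nat.card E ≤ d := by
    rw [Nat.card_coe_set_eq]
    calc E.ncard ≤ (M.charpoly.roots.toFinset : Set L).ncard :=
          Set.ncard_le_ncard hEroots (Finset.finite_toSet _)
      _ = M.charpoly.roots.toFinset.card := by rw [Set.ncard_coe_finset]
      _ ≤ Multiset.card M.charpoly.roots := Multiset.toFinset_card_le _
      _ ≤ M.charpoly.natDegree := Polynomial.card_roots' _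
      _ = d := by rw [Matrix.charpoly_natDegree_eq_dim, Fintype.card_fin]
  -- there is an eigenvalue different from 1
  have hex : ∃ μ ∈ E, μ ≠ 1 := by
    by_contra hcon
    push_neg at hcon
    -- all roots of charpoly are 1
    have hallroots : ∀ r ∈ M.charpoly.roots, r = 1 := by
      intro r hr
      apply hcon
      rw [hE, aux_mem_spectrum_iff_isRoot_charpoly]
      exact (Polynomial.mem_roots (M.charpoly_monic.ne_zero)).mp hr
    have hsplit : M.charpoly.Splits := IsAlgClosed.splits _
    have hcard : Multiset.card M.charpoly.roots = d := by
      rw [(Polynomial.splits_iff_card_roots).mp hsplit, Matrix.charpoly_natDegree_eq_dim,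
        Fintype.card_fin]
    have hrepl : M.charpoly.roots = Multiset.replicate d 1 :=
      Multiset.eq_replicate.mpr ⟨hcard, hallroots⟩
    have hcp : M.charpoly = (X - C 1) ^ d := by
      rw [hsplit.eq_prod_roots_of_monic M.charpoly_monic, hrepl]
      simp [Multiset.map_replicate, Multiset.prod_replicate]
    have hnilp : (M - 1) ^ d = 0 := by
      have := Matrix.aeval_self_charpoly M
      rw [hcp] at this
      simpa using this
    have hle : d ≤ p ^ d := (Nat.lt_pow_self (n := d) hp.one_lt).le
    have hMp : M ^ p ^ d = 1 := by
      haveI : CharP L p := charP_of_injective_algebraMap (algebraMap F L).injective p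
      have hchar : (M - 1) ^ p ^ d = M ^ p ^ d - 1 ^ p ^ d :=
        sub_pow_char_pow_of_commute p d (Commute.one_right M)
      have hzero : (M - 1) ^ p ^ d = 0 := by
        rw [← Nat.add_sub_cancel' hle, pow_add, hnilp, zero_mul]
      rw [hzero, one_pow] at hchar
      exact sub_eq_zero.mp hchar.symm
    have hyp : y ^ p ^ d = 1 := by
      apply Units.ext
      apply hφinj
      rw [hpow, hMp]
      simp
    have hdvd : s ∣ p ^ d := hy ▸ orderOf_dvd_of_pow_eq_one hyp
    exact hps ((Nat.prime_dvd_prime_iff_eq hs hp).mp (hs.dvd_of_dvd_pow hdvd)).symm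
  obtain ⟨lam0, hlam0E, hlam0ne⟩ := hex
  have hlam0s : lam0 ^ s = 1 := hroot1 lam0 hlam0E
  have hlam00 : lam0 ≠ 0 := by
    intro h
    rw [h, zero_pow hs.ne_zero] at hlam0s
    exact zero_ne_one hlam0s
  set u0 : Lˣ := Units.mk0 lam0 hlam00 with hu0def
  have hu0 : orderOf u0 = s := by
    rw [← orderOf_units]
    exact orderOf_eq_prime hlam0s hlam0ne
  -- the exponent function
  set N := Subgroup.normalizer (Subgroup.zpowers y : Set (GL (Fin d) F)) with hN
  have hexp : ∀ g : N, ∃ n : ℕ, n < s ∧ y ^ n = (g : GL (Fin d) F) * y * (g : GL (Fin d) F)⁻¹ := by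
    rintro ⟨g, hg⟩
    have h1 : g * y * g⁻¹ ∈ Subgroup.zpowers y :=
      (Subgroup.mem_normalizer_iff.mp hg y).mp (Subgroup.mem_zpowers y)
    obtain ⟨k, hk⟩ := Subgroup.mem_zpowers_iff.mp h1
    have hs0 : (0 : ℤ) < (s : ℤ) := by exact_mod_cast hs.pos
    refine ⟨(k % (s : ℤ)).toNat, ?_, ?_⟩
    · have := Int.emod_lt_of_pos k hs0
      have := Int.emod_nonneg k hs0.ne'
      omega
    · have h2 : y ^ ((k % (s : ℤ)).toNat : ℤ) = y ^ k := by
        rw [Int.toNat_of_nonneg (Int.emod_nonneg k hs0.ne'), ← hy, zpow_mod_orderOf]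
      rw [← zpow_natCast, h2, hk]
  set nn : N → ℕ := fun g => Classical.choose (hexp g) with hnn
  have hnlt : ∀ g : N, nn g < s := fun g => (Classical.choose_spec (hexp g)).1
  have hneq : ∀ g : N, y ^ nn g = (g : GL (Fin d) F) * y * (g : GL (Fin d) F)⁻¹ :=
    fun g => (Classical.choose_spec (hexp g)).2
  -- the eigenvalue map
  have hmem : ∀ g : N, lam0 ^ nn g ∈ E := by
    intro g
    set G : (Matrix (Fin d) (Fin d) L)ˣ := Units.map φ.toMonoidHom ((g : GL (Fin d) F)) with hG
    have h1 : M ^ nn g = (G : Matrix (Fin d) (Fin d) L) * M * ((G⁻¹ : (Matrix (Fin d) (Fin d) L)ˣ) : Matrix (Fin d) (Fin d) L) := by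
      calc M ^ nn g = φ ((y ^ nn g : GL (Fin d) F) : Matrix (Fin d) (Fin d) F) := (hpow _).symm
        _ = φ ((((g : GL (Fin d) F) * y * (g : GL (Fin d) F)⁻¹ : GL (Fin d) F))
              : Matrix (Fin d) (Fin d) F) := by rw [hneq g]
        _ = (G : Matrix (Fin d) (Fin d) L) * M
              * ((G⁻¹ : (Matrix (Fin d) (Fin d) L)ˣ) : Matrix (Fin d) (Fin d) L) := by
            simp only [hG, Units.coe_map, Units.coe_map_inv, Units.val_mul, _root_.map_mul]
            rfl
    have h2 : spectrum L (M ^ nn g) = E := by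
      rw [h1, hE, spectrum.units_conjugate]
    have h3 : lam0 ^ nn g ∈ spectrum L (M ^ nn g) :=
      (spectrum.map_pow_of_nonempty hEne (nn g)) ▸ Set.mem_image_of_mem _ hlam0E
    rwa [h2] at h3
  set C' := (Subgroup.centralizer {y}).subgroupOf N with hC'
  -- define the map on the quotient
  set f : N ⧸ C' → E := fun q => Quotient.liftOn' q (fun g => (⟨lam0 ^ nn g, hmem g⟩ : E))
    (by
      intro g₁ g₂ h
      rw [QuotientGroup.leftRel_apply] at h
      rw [hC', Subgroup.mem_subgroupOf] at h
      have hcomm := Subgroup.mem_centralizer_iff.mp h y (Set.mem_singleton y)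
      -- (g₁⁻¹ g₂) commutes with y: y * (g₁⁻¹ g₂) = (g₁⁻¹ g₂) * y
      have hc : (g₁ : GL (Fin d) F) * y * (g₁ : GL (Fin d) F)⁻¹
          = (g₂ : GL (Fin d) F) * y * (g₂ : GL (Fin d) F)⁻¹ := by
        have h2 : y * ((g₁ : GL (Fin d) F)⁻¹ * (g₂ : GL (Fin d) F))
            = ((g₁ : GL (Fin d) F)⁻¹ * (g₂ : GL (Fin d) F)) * y := by
          simpa using hcomm
        calc (g₁ : GL (Fin d) F) * y * (g₁ : GL (Fin d) F)⁻¹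
            = (g₁ : GL (Fin d) F) * (y * ((g₁ : GL (Fin d) F)⁻¹ * (g₂ : GL (Fin d) F)))
              * (g₂ : GL (Fin d) F)⁻¹ := by group
          _ = (g₁ : GL (Fin d) F) * (((g₁ : GL (Fin d) F)⁻¹ * (g₂ : GL (Fin d) F)) * y)
              * (g₂ : GL (Fin d) F)⁻¹ := by rw [h2]
          _ = (g₂ : GL (Fin d) F) * y * (g₂ : GL (Fin d) F)⁻¹ := by group
      have hpoweq : y ^ nn g₁ = y ^ nn g₂ := by rw [hneq g₁, hneq g₂, hc]
      have hmod : nn g₁ ≡ nn g₂ [MOD s] := by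
        have := pow_eq_pow_iff_modEq.mp hpoweq
        rwa [hy] at this
      have : nn g₁ = nn g₂ := by
        have h1 := hnlt g₁
        have h2 := hnlt g₂
        unfold Nat.ModEq at hmod
        rwa [Nat.mod_eq_of_lt h1, Nat.mod_eq_of_lt h2] at hmod
      simp [this])
    with hf
  have hfinj : Function.Injective f := by
    intro q₁ q₂
    refine Quotient.inductionOn₂' q₁ q₂ ?_
    intro g₁ g₂ hq
    rw [hf] at hq
    simp only [Quotient.liftOn'_mk''] at hq
    have hval : lam0 ^ nn g₁ = lam0 ^ nn g₂ := congrArg Subtype.val hq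
    have huval : u0 ^ nn g₁ = u0 ^ nn g₂ := by
      apply Units.ext
      simpa [hu0def] using hval
    have hmod : nn g₁ ≡ nn g₂ [MOD s] := by
      have := pow_eq_pow_iff_modEq.mp huval
      rwa [hu0] at this
    have hnneq : nn g₁ = nn g₂ := by
      have h1 := hnlt g₁
      have h2 := hnlt g₂
      unfold Nat.ModEq at hmod
      rwa [Nat.mod_eq_of_lt h1, Nat.mod_eq_of_lt h2] at hmod
    have hc : (g₁ : GL (Fin d) F) * y * (g₁ : GL (Fin d) F)⁻¹
        = (g₂ : GL (Fin d) F) * y * (g₂ : GL (Fin d) F)⁻¹ := by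
      rw [← hneq g₁, ← hneq g₂, hnneq]
    apply Quotient.sound'
    rw [QuotientGroup.leftRel_apply, hC', Subgroup.mem_subgroupOf]
    rw [Subgroup.mem_centralizer_iff]
    intro z hz
    rw [Set.mem_singleton_iff] at hz
    rw [hz]
    -- goal : y * ↑(g₁⁻¹ * g₂) = ↑(g₁⁻¹ * g₂) * y
    have : y * ((g₁ : GL (Fin d) F)⁻¹ * (g₂ : GL (Fin d) F))
        = ((g₁ : GL (Fin d) F)⁻¹ * (g₂ : GL (Fin d) F)) * y := by
      have := congrArg (fun z => (g₁ : GL (Fin d) F)⁻¹ * z * (g₂ : GL (Fin d) F)) hc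
      calc y * ((g₁ : GL (Fin d) F)⁻¹ * (g₂ : GL (Fin d) F))
          = (g₁ : GL (Fin d) F)⁻¹ * ((g₁ : GL (Fin d) F) * y * (g₁ : GL (Fin d) F)⁻¹)
            * (g₂ : GL (Fin d) F) := by group
        _ = (g₁ : GL (Fin d) F)⁻¹ * ((g₂ : GL (Fin d) F) * y * (g₂ : GL (Fin d) F)⁻¹)
            * (g₂ : GL (Fin d) F) := by rw [hc]
        _ = ((g₁ : GL (Fin d) F)⁻¹ * (g₂ : GL (Fin d) F)) * y := by group
    simpa using this
  -- conclude
  have : Nat.card (N ⧸ C') ≤ Nat.card E := Nat.card_le_card_of_injective f hfinj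
  calc (Subgroup.centralizer {y}).relIndex N = Nat.card (N ⧸ C') := rfl
    _ ≤ Nat.card E := this
    _ ≤ d := hcardE
end

section
/- Let p and s be distinct primes, d, a natural numbers, and x ∈ PGL_d(p^a) an element of order s with gcd(s, p^a − 1) = 1. Then the index [N_{PGL_d(p^a)}(⟨x⟩) : C_{PGL_d(p^a)}(x)] is at most d. -/
open Polynomial Matrix

section helpers

variable {n : Type*} [DecidableEq n] [Fintype n] {R : Type*} [CommRing R]

lemma aux_charpoly_units_conj (u : (Matrix n n R)ˣ) (A : Matrix n n R) :
    ((u : Matrix n n R) * A * ((u⁻¹ : (Matrix n n R)ˣ) : Matrix n n R)).charpoly = A.charpoly := by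
  let f : Matrix n n R →+* Matrix n n R[X] := (C : R →+* R[X]).mapMatrix
  let u' : (Matrix n n R[X])ˣ := Units.map f.toMonoidHom u
  have hcm : charmatrix ((u : Matrix n n R) * A * ((u⁻¹ : (Matrix n n R)ˣ) : Matrix n n R))
      = (u' : Matrix n n R[X]) * charmatrix A * ((u'⁻¹ : (Matrix n n R[X])ˣ) : Matrix n n R[X]) := by
    have h1 : (u' : Matrix n n R[X]) = f (u : Matrix n n R) := rfl
    have h2 : ((u'⁻¹ : (Matrix n n R[X])ˣ) : Matrix n n R[X]) = f ((u⁻¹ : (Matrix n n R)ˣ) : Matrix n n R) := rfl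
    have hc : scalar n (X : R[X]) * (u' : Matrix n n R[X]) = (u' : Matrix n n R[X]) * scalar n X :=
      scalar_commute (X : R[X]) (Commute.all X) _
    have hA : charmatrix A = scalar n X - f A := rfl
    show scalar n (X : R[X]) - f _ = _
    rw [hA, mul_sub, sub_mul, ← hc]
    rw [_root_.map_mul, _root_.map_mul, h1, h2]
    congr 1
    rw [mul_assoc, ← h1, ← h2, Units.mul_inv, mul_one]
  rw [Matrix.charpoly, Matrix.charpoly, hcm, Matrix.det_units_conj]

lemma aux_eval_charpoly {K : Type*} [Field K] (M : Matrix n n K) (μ : K) :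
    M.charpoly.eval μ = (μ • (1 : Matrix n n K) - M).det := by
  have : (M.charpoly).eval μ = ((charmatrix M).map (evalRingHom μ)).det := by
    rw [Matrix.charpoly, ← RingHom.mapMatrix_apply, ← RingHom.map_det, coe_evalRingHom]
  rw [this]
  congr 1
  ext i j
  by_cases h : i = j <;>
    simp [charmatrix_apply, h, Matrix.one_apply, Matrix.smul_apply, Matrix.diagonal_apply]

lemma aux_isRoot_iff {K : Type*} [Field K] (M : Matrix n n K) (μ : K) :
    M.charpoly.IsRoot μ ↔ ∃ v, v ≠ 0 ∧ M.mulVec v = μ • v := by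
  rw [Polynomial.IsRoot, aux_eval_charpoly, ← Matrix.exists_mulVec_eq_zero_iff]
  constructor
  · rintro ⟨v, hv, hmv⟩
    refine ⟨v, hv, ?_⟩
    rw [Matrix.sub_mulVec, Matrix.smul_mulVec, Matrix.one_mulVec, sub_eq_zero] at hmv
    exact hmv.symm
  · rintro ⟨v, hv, hmv⟩
    refine ⟨v, hv, ?_⟩
    rw [Matrix.sub_mulVec, Matrix.smul_mulVec, Matrix.one_mulVec, hmv, sub_self]

lemma aux_pow_mulVec {K : Type*} [CommRing K] (M : Matrix n n K) (v : n → K) (μ : K)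
    (h : M.mulVec v = μ • v) (k : ℕ) : (M ^ k).mulVec v = μ ^ k • v := by
  induction k with
  | zero => simp
  | succ k ih =>
    rw [pow_succ, ← Matrix.mulVec_mulVec, h, Matrix.mulVec_smul, ih, smul_smul, pow_succ]
    ring_nf

lemma aux_exists_root [Nonempty n] {K : Type*} [Field K] [IsAlgClosed K] {M : Matrix n n K} {s : ℕ}
    (hcast : (s : K) ≠ 0) (hM : M ^ s = 1) (hM1 : M ≠ 1) :
    ∃ ζ : K, M.charpoly.IsRoot ζ ∧ ζ ≠ 1 := by
  have hint : IsIntegral K M := ⟨M.charpoly, M.charpoly_monic, M.aeval_self_charpoly⟩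
  set P := minpoly K M with hP
  have hPdvd : P ∣ X ^ s - C 1 := by
    apply minpoly.dvd
    simp [hM]
  have hsepbig : (X ^ s - C (1 : K)).Separable := separable_X_pow_sub_C 1 hcast one_ne_zero
  have hPsep : P.Separable := hsepbig.of_dvd hPdvd
  have hPmonic : P.Monic := minpoly.monic hint
  have hPsplits : P.Splits := IsAlgClosed.splits P
  have hdeg : 0 < P.natDegree := minpoly.natDegree_pos hint
  have hcard : P.roots.card = P.natDegree := (splits_iff_card_roots).mp hPsplits
  have hPc : P ∣ M.charpoly := minpoly.dvd K M (M.aeval_self_charpoly)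
  suffices h : ∃ ζ : K, P.IsRoot ζ ∧ ζ ≠ 1 by
    obtain ⟨ζ, h1, h2⟩ := h
    exact ⟨ζ, by
      rw [Polynomial.IsRoot] at h1 ⊢
      exact eval_eq_zero_of_dvd_of_eval_eq_zero hPc h1, h2⟩
  by_contra hcon
  push_neg at hcon
  have hall : ∀ r ∈ P.roots, r = 1 := by
    intro r hr
    exact hcon r ((Polynomial.isRoot_of_mem_roots hr))
  have hroots : P.roots = Multiset.replicate P.natDegree 1 := by
    refine Multiset.eq_replicate.mpr ⟨hcard, hall⟩
  have hPeq : P = (X - C 1) ^ P.natDegree := by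
    have h := hPsplits.eq_prod_roots_of_monic hPmonic
    rw [hroots, Multiset.map_replicate, Multiset.prod_replicate] at h
    exact h
  have hle : P.natDegree ≤ 1 := by
    by_contra hgt
    push_neg at hgt
    have hsq : (X - C (1:K)) * (X - C 1) ∣ P := by
      rw [hPeq, ← pow_two]
      exact pow_dvd_pow _ hgt
    exact (Polynomial.not_isUnit_X_sub_C (1:K)) (hPsep.squarefree _ hsq)
  have hPeq1 : P = X - C 1 := by
    rw [hPeq]
    have : P.natDegree = 1 := le_antisymm hle hdeg
    rw [this, pow_one]
  have haev := minpoly.aeval K M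
  rw [← hP, hPeq1] at haev
  have : M - 1 = 0 := by simpa using haev
  exact hM1 (by rwa [sub_eq_zero] at this)

end helpers

lemma aux_center_pow {F : Type*} [Field F] [Fintype F] {d : ℕ} (hd : 1 ≤ d)
    (z : GL (Fin d) F) (hz : z ∈ Subgroup.center (GL (Fin d) F)) :
    z ^ (Fintype.card F - 1) = 1 := by
  have hcomm : ∀ t : TransvectionStruct (Fin d) F,
      Commute t.toMatrix (z : Matrix (Fin d) (Fin d) F) := by
    intro t
    let u : GL (Fin d) F := ⟨t.toMatrix, t.inv.toMatrix, t.mul_inv, t.inv_mul⟩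
    have h := Subgroup.mem_center_iff.mp hz u
    have h2 := congrArg Units.val h
    exact h2
  obtain ⟨c, hc⟩ := Matrix.mem_range_scalar_of_commute_transvectionStruct hcomm
  have hc0 : c ≠ 0 := by
    intro h0
    rw [h0, map_zero] at hc
    have h1 : (z : Matrix (Fin d) (Fin d) F) * ((z⁻¹ : GL (Fin d) F) : Matrix (Fin d) (Fin d) F) = 1 :=
      z.mul_inv
    rw [← hc, zero_mul] at h1
    have := congrFun (congrFun h1 ⟨0, hd⟩) ⟨0, hd⟩
    simp [Matrix.one_apply_eq] at this
  apply Units.ext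
  rw [Units.val_pow_eq_pow_val, Units.val_one, ← hc, ← _root_.map_pow,
    FiniteField.pow_card_sub_one_eq_one c hc0, _root_.map_one]

set_option maxHeartbeats 1000000 in
theorem aux_main {F : Type*} [Field F] [Fintype F] {p : ℕ} [Fact p.Prime] [CharP F p]
    (s d : ℕ) (hs : s.Prime) (hps : p ≠ s) (hd : 1 ≤ d)
    (hgcd : Nat.gcd s (Fintype.card F - 1) = 1)
    (x : GL (Fin d) F ⧸ Subgroup.center (GL (Fin d) F)) (hx : orderOf x = s) :
    (Subgroup.centralizer {x}).relIndex (Subgroup.normalizer (Subgroup.zpowers x : Set _)) ≤ d := by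
  classical
  set π := QuotientGroup.mk' (Subgroup.center (GL (Fin d) F)) with hπ
  haveI : Nonempty (Fin d) := ⟨⟨0, hd⟩⟩
  have hs2 := hs.two_le
  have hx1 : x ≠ 1 := by
    intro h; rw [h, orderOf_one] at hx; omega
  -- center facts
  have hZdvd : ∀ z : GL (Fin d) F, z ∈ Subgroup.center (GL (Fin d) F) → orderOf z ∣ Fintype.card F - 1 := fun z hz =>
    orderOf_dvd_of_pow_eq_one (aux_center_pow hd z hz)
  have hZs : ∀ z : GL (Fin d) F, z ∈ Subgroup.center (GL (Fin d) F) → z ^ s = 1 → z = 1 := by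
    intro z hz hzs
    have h1 : orderOf z ∣ s := orderOf_dvd_of_pow_eq_one hzs
    have h2 := hZdvd z hz
    have h3 : orderOf z ∣ 1 := hgcd ▸ Nat.dvd_gcd h1 h2
    rw [Nat.dvd_one] at h3
    exact orderOf_eq_one_iff.mp h3
  -- lift y with y ^ s = 1
  obtain ⟨y₀, hy₀⟩ := QuotientGroup.mk'_surjective (Subgroup.center (GL (Fin d) F)) x
  have hy₀s : y₀ ^ s ∈ Subgroup.center (GL (Fin d) F) := by
    have h1 : π (y₀ ^ s) = 1 := by rw [_root_.map_pow, hy₀, ← hx, pow_orderOf_eq_one]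
    rwa [← QuotientGroup.ker_mk' (Subgroup.center (GL (Fin d) F)), MonoidHom.mem_ker]
  set zc := y₀ ^ s with hzc
  set m := orderOf zc with hm
  have hmdvd : m ∣ Fintype.card F - 1 := hZdvd _ hy₀s
  have hcop : Nat.Coprime s m := Nat.Coprime.coprime_dvd_right hmdvd hgcd
  have hbez : (1 : ℤ) = s * Nat.gcdA s m + m * Nat.gcdB s m := by
    have h := Nat.gcd_eq_gcd_ab s m
    rw [hcop.gcd_eq_one] at h
    exact_mod_cast h
  set w := zc ^ Nat.gcdA s m with hw
  have hws : w ^ s = zc := by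
    have h1 : w ^ s = zc ^ (Nat.gcdA s m * s) := by
      rw [hw, ← zpow_natCast (zc ^ Nat.gcdA s m) s, ← _root_.zpow_mul]
    have h2 : (Nat.gcdA s m * (s : ℤ)) = 1 - m * Nat.gcdB s m := by linarith [hbez]
    rw [h1, h2, _root_.zpow_sub, zpow_one, _root_.zpow_mul, zpow_natCast, pow_orderOf_eq_one, _root_.one_zpow,
      inv_one, mul_one]
  have hwZ : w ∈ Subgroup.center (GL (Fin d) F) := Subgroup.zpow_mem _ hy₀s _
  set y := y₀ * w⁻¹ with hy
  have hcommw : ∀ g : GL (Fin d) F, Commute g w := fun g => Subgroup.mem_center_iff.mp hwZ g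
  have hys : y ^ s = 1 := by
    have hcom : Commute y₀ w⁻¹ := (hcommw y₀).inv_right
    rw [hy, hcom.mul_pow, inv_pow, hws, ← hzc, mul_inv_cancel]
  have hyx : π y = x := by
    have h1 : π w⁻¹ = 1 := by
      rw [_root_.map_inv]
      have : π w = 1 := by
        rw [← MonoidHom.mem_ker, QuotientGroup.ker_mk' (Subgroup.center (GL (Fin d) F))]; exact hwZ
      rw [this, inv_one]
    rw [hy, _root_.map_mul, h1, mul_one, hy₀]
  have hy1 : y ≠ 1 := fun h => hx1 (by rw [← hyx, h, _root_.map_one])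
  -- pass to algebraic closure
  set K := AlgebraicClosure F with hK
  haveI : CharP K p := charP_of_injective_algebraMap (algebraMap F K).injective p
  set Φ : Matrix (Fin d) (Fin d) F →+* Matrix (Fin d) (Fin d) K :=
    (algebraMap F K).mapMatrix with hΦ
  have hΦinj : Function.Injective Φ := by
    intro A B hAB
    ext i j
    have h3 := congrFun (congrFun hAB i) j
    have h4 : algebraMap F K (A i j) = algebraMap F K (B i j) := by
      simpa [hΦ, RingHom.mapMatrix_apply, Matrix.map_apply] using h3
    exact (algebraMap F K).injective h4
  set M : Matrix (Fin d) (Fin d) K := Φ (y : Matrix (Fin d) (Fin d) F) with hM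
  have hscast : (s : K) ≠ 0 := by
    intro h
    rw [CharP.cast_eq_zero_iff K p] at h
    exact hps ((Nat.prime_dvd_prime_iff_eq Fact.out hs).mp h)
  have hyvals : (y : Matrix (Fin d) (Fin d) F) ^ s = 1 := by
    rw [← Units.val_pow_eq_pow_val, hys, Units.val_one]
  have hMs : M ^ s = 1 := by
    rw [hM, ← _root_.map_pow, hyvals, _root_.map_one]
  have hM1 : M ≠ 1 := by
    intro h
    rw [hM, ← _root_.map_one Φ] at h
    have := hΦinj h
    exact hy1 (Units.ext this)
  obtain ⟨ζ, hζroot, hζ1⟩ := aux_exists_root hscast hMs hM1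
  obtain ⟨v, hv0, hveig⟩ := (aux_isRoot_iff M ζ).mp hζroot
  have hζs : ζ ^ s = 1 := by
    have h1 := aux_pow_mulVec M v ζ hveig s
    rw [hMs, Matrix.one_mulVec] at h1
    obtain ⟨i, hi⟩ := Function.ne_iff.mp hv0
    have h2 := congrFun h1 i
    simp only [Pi.smul_apply, smul_eq_mul] at h2
    have h3 : (ζ ^ s - 1) * v i = 0 := by
      rw [sub_mul, one_mul, ← h2]; ring
    rcases mul_eq_zero.mp h3 with h | h
    · exact sub_eq_zero.mp h
    · exact absurd h hi
  have hζord : orderOf ζ = s := by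
    have h1 : orderOf ζ ∣ s := orderOf_dvd_of_pow_eq_one hζs
    rcases hs.eq_one_or_self_of_dvd _ h1 with h | h
    · exact absurd (orderOf_eq_one_iff.mp h) hζ1
    · exact h
  -- normalizer and centralizer
  set C := Subgroup.centralizer {x} with hC
  set N := Subgroup.normalizer (Subgroup.zpowers x : Set (GL (Fin d) F ⧸ Subgroup.center (GL (Fin d) F))) with hN
  have hxfin : IsOfFinOrder x := orderOf_pos_iff.mp (by omega)
  have hconj : ∀ n : N, ∃ k : ℕ, (n : GL (Fin d) F ⧸ Subgroup.center (GL (Fin d) F)) * x * (n : GL (Fin d) F ⧸ Subgroup.center (GL (Fin d) F))⁻¹ = x ^ k := by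
    intro n
    have h1 : (n : GL (Fin d) F ⧸ Subgroup.center (GL (Fin d) F)) * x * (n : GL (Fin d) F ⧸ Subgroup.center (GL (Fin d) F))⁻¹ ∈ Subgroup.zpowers x :=
      (Subgroup.mem_normalizer_iff.mp n.2 x).mp (Subgroup.mem_zpowers x)
    have h2 : (n : GL (Fin d) F ⧸ Subgroup.center (GL (Fin d) F)) * x * (n : GL (Fin d) F ⧸ Subgroup.center (GL (Fin d) F))⁻¹ ∈ Submonoid.powers x :=
      hxfin.mem_powers_iff_mem_zpowers.mpr h1
    obtain ⟨k, hk⟩ := h2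
    exact ⟨k, hk.symm⟩
  set kf : N → ℕ := fun n => Classical.choose (hconj n) with hkfdef
  have hkf : ∀ n : N, (n : GL (Fin d) F ⧸ Subgroup.center (GL (Fin d) F)) * x * (n : GL (Fin d) F ⧸ Subgroup.center (GL (Fin d) F))⁻¹ = x ^ kf n := fun n =>
    Classical.choose_spec (hconj n)
  -- each ζ ^ kf n is a root of charpoly M
  have hroot : ∀ n : N, M.charpoly.IsRoot (ζ ^ kf n) := by
    intro n
    obtain ⟨g, hg⟩ := QuotientGroup.mk'_surjective (Subgroup.center (GL (Fin d) F)) (n : GL (Fin d) F ⧸ Subgroup.center (GL (Fin d) F))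
    set k := kf n with hk
    have hq : π (g * y * g⁻¹) = π (y ^ k) := by
      rw [_root_.map_mul, _root_.map_mul, _root_.map_inv, _root_.map_pow, hyx, hg]
      exact hkf n
    set z' := (y ^ k)⁻¹ * (g * y * g⁻¹) with hz'
    have hz'Z : z' ∈ Subgroup.center (GL (Fin d) F) := by
      have h1 : π z' = 1 := by
        rw [hz', _root_.map_mul, _root_.map_inv, hq, inv_mul_cancel]
      rwa [← QuotientGroup.ker_mk' (Subgroup.center (GL (Fin d) F)), MonoidHom.mem_ker]
    have hgyg : g * y * g⁻¹ = y ^ k * z' := by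
      rw [hz']; group
    have hz's : z' ^ s = 1 := by
      have hcz : Commute (y ^ k) z' := Subgroup.mem_center_iff.mp hz'Z (y ^ k)
      have hcj : ∀ t : ℕ, (g * y * g⁻¹) ^ t = g * y ^ t * g⁻¹ := by
        intro t
        induction t with
        | zero => group
        | succ t ih => rw [pow_succ, ih, pow_succ, ← mul_assoc]; group
      have h1 : (g * y * g⁻¹) ^ s = 1 := by
        rw [hcj s, hys, mul_one, mul_inv_cancel]
      rw [hgyg, hcz.mul_pow] at h1
      have h2 : (y ^ k) ^ s = 1 := by
        rw [← pow_mul, mul_comm, pow_mul, hys, one_pow]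
      rw [h2, one_mul] at h1
      exact h1
    have hgyg2 : g * y * g⁻¹ = y ^ k := by rw [hgyg, hZs z' hz'Z hz's, mul_one]
    have hmat : (g : Matrix (Fin d) (Fin d) F) * (y : Matrix (Fin d) (Fin d) F) *
        ((g⁻¹ : GL (Fin d) F) : Matrix (Fin d) (Fin d) F) = (y : Matrix (Fin d) (Fin d) F) ^ k := by
      have h1 := congrArg Units.val hgyg2
      simpa [Units.val_pow_eq_pow_val] using h1
    have hcp : ((y : Matrix (Fin d) (Fin d) F) ^ k).charpoly
        = (y : Matrix (Fin d) (Fin d) F).charpoly := by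
      rw [← hmat]
      exact aux_charpoly_units_conj g _
    have hcpK : (M ^ k).charpoly = M.charpoly := by
      have h1 : M ^ k = Φ ((y : Matrix (Fin d) (Fin d) F) ^ k) := by rw [hM, _root_.map_pow]
      rw [h1, hM, hΦ, RingHom.mapMatrix_apply, RingHom.mapMatrix_apply,
        Matrix.charpoly_map, Matrix.charpoly_map, hcp]
    have heig : (M ^ k).mulVec v = ζ ^ k • v := aux_pow_mulVec M v ζ hveig k
    have h2 := (aux_isRoot_iff (M ^ k) (ζ ^ k)).mpr ⟨v, hv0, heig⟩
    rwa [hcpK] at h2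
  -- coset correspondence
  have hzeta_iff : ∀ n₁ n₂ : N, ζ ^ kf n₁ = ζ ^ kf n₂ ↔
      (n₁ : GL (Fin d) F ⧸ Subgroup.center (GL (Fin d) F)) * x * (n₁ : GL (Fin d) F ⧸ Subgroup.center (GL (Fin d) F))⁻¹ = (n₂ : GL (Fin d) F ⧸ Subgroup.center (GL (Fin d) F)) * x * (n₂ : GL (Fin d) F ⧸ Subgroup.center (GL (Fin d) F))⁻¹ := by
    intro n₁ n₂
    rw [hkf n₁, hkf n₂]
    have hζu : IsUnit ζ := by
      apply IsUnit.of_mul_eq_one (a := ζ) (ζ ^ (s - 1))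
      rw [← pow_succ']
      have : s - 1 + 1 = s := by omega
      rw [this, hζs]
    set u := hζu.unit with hudef
    have hu : (u : K) = ζ := IsUnit.unit_spec hζu
    have huord : orderOf u = s := by
      rw [← hζord, ← hu, orderOf_units]
    have hpowiff : ∀ a b : ℕ, ζ ^ a = ζ ^ b ↔ u ^ a = u ^ b := by
      intro a b
      constructor
      · intro h
        apply Units.ext
        rw [Units.val_pow_eq_pow_val, Units.val_pow_eq_pow_val, hu]
        exact h
      · intro h
        have := congrArg Units.val h
        rwa [Units.val_pow_eq_pow_val, Units.val_pow_eq_pow_val, hu] at this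
    rw [hpowiff, pow_eq_pow_iff_modEq, pow_eq_pow_iff_modEq, huord, hx]
  have hcoset : ∀ n₁ n₂ : N, ((n₁ : GL (Fin d) F ⧸ Subgroup.center (GL (Fin d) F)) * x * (n₁ : GL (Fin d) F ⧸ Subgroup.center (GL (Fin d) F))⁻¹
      = (n₂ : GL (Fin d) F ⧸ Subgroup.center (GL (Fin d) F)) * x * (n₂ : GL (Fin d) F ⧸ Subgroup.center (GL (Fin d) F))⁻¹) ↔ n₁⁻¹ * n₂ ∈ C.subgroupOf N := by
    intro n₁ n₂
    rw [Subgroup.mem_subgroupOf]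
    have hcoe : ((n₁⁻¹ * n₂ : N) : GL (Fin d) F ⧸ Subgroup.center (GL (Fin d) F)) = (n₁ : GL (Fin d) F ⧸ Subgroup.center (GL (Fin d) F))⁻¹ * (n₂ : GL (Fin d) F ⧸ Subgroup.center (GL (Fin d) F)) := rfl
    rw [hC, Subgroup.mem_centralizer_iff]
    simp only [Set.mem_singleton_iff, forall_eq, hcoe]
    set a := (n₁ : GL (Fin d) F ⧸ Subgroup.center (GL (Fin d) F))
    set b := (n₂ : GL (Fin d) F ⧸ Subgroup.center (GL (Fin d) F))
    constructor
    · intro h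
      have h1 : x * (a⁻¹ * b) = a⁻¹ * (a * x * a⁻¹) * b := by group
      have h2 : a⁻¹ * (b * x * b⁻¹) * b = a⁻¹ * b * x := by group
      rw [h, h2] at h1
      exact h1
    · intro h
      have h2 : (a⁻¹ * b) * x * (a⁻¹ * b)⁻¹ = x := by rw [← h]; group
      have h3 : b * x * b⁻¹ = a * ((a⁻¹ * b) * x * (a⁻¹ * b)⁻¹) * a⁻¹ := by group
      rw [h2] at h3
      exact h3.symm
  -- the injection
  set Rset := M.charpoly.roots.toFinset with hRset
  have hmem : ∀ n : N, ζ ^ kf n ∈ Rset := by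
    intro n
    rw [hRset, Multiset.mem_toFinset, Polynomial.mem_roots (M.charpoly_monic.ne_zero)]
    exact hroot n
  let f : N → {r // r ∈ Rset} := fun n => ⟨ζ ^ kf n, hmem n⟩
  let fbar : (N ⧸ C.subgroupOf N) → {r // r ∈ Rset} := fun q =>
    Quotient.liftOn' q f (fun n₁ n₂ h => by
      have h' := (QuotientGroup.leftRel_apply).mp h
      apply Subtype.ext
      show ζ ^ kf n₁ = ζ ^ kf n₂
      exact (hzeta_iff n₁ n₂).mpr ((hcoset n₁ n₂).mpr h'))
  have hinj : Function.Injective fbar := by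
    intro q₁ q₂ h
    induction q₁ using Quotient.inductionOn' with
    | h n₁ =>
      induction q₂ using Quotient.inductionOn' with
      | h n₂ =>
        apply Quotient.sound'
        rw [QuotientGroup.leftRel_apply]
        have h2 : ζ ^ kf n₁ = ζ ^ kf n₂ := congrArg Subtype.val h
        exact (hcoset n₁ n₂).mp ((hzeta_iff n₁ n₂).mp h2)
  have hcard : Nat.card (N ⧸ C.subgroupOf N) ≤ Rset.card := by
    have h1 := Nat.card_le_card_of_injective fbar hinj
    rwa [Nat.card_eq_finsetCard] at h1
  have hRd : Rset.card ≤ d := by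
    calc Rset.card ≤ Multiset.card M.charpoly.roots := Multiset.toFinset_card_le _
      _ ≤ M.charpoly.natDegree := Polynomial.card_roots' _
      _ = d := by rw [Matrix.charpoly_natDegree_eq_dim, Fintype.card_fin]
  have : C.relIndex N = Nat.card (N ⧸ C.subgroupOf N) := by
    rw [Subgroup.relIndex, Subgroup.index_eq_card]
  rw [this]
  exact le_trans hcard hRd

/-- Let `p` and `s` be distinct primes, `d, a ≥ 1`, and let `x ∈ PGL_d(p^a)`
have order `s` with `gcd(s, p^a - 1) = 1`. Then
`[N_{PGL_d(p^a)}(⟨x⟩) : C_{PGL_d(p^a)}(x)] ≤ d`. -/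
theorem stmt4 (p s d a : ℕ) [Fact p.Prime] (hs : s.Prime) (hps : p ≠ s)
    (hd : 1 ≤ d) (ha : a ≠ 0) (hgcd : Nat.gcd s (p ^ a - 1) = 1)
    (x : GL (Fin d) (GaloisField p a) ⧸ Subgroup.center (GL (Fin d) (GaloisField p a)))
    (hx : orderOf x = s) :
    (Subgroup.centralizer {x}).relIndex (Subgroup.normalizer (Subgroup.zpowers x : Set _)) ≤ d := by
  haveI : Fintype (GaloisField p a) := Fintype.ofFinite _
  have hcard : Fintype.card (GaloisField p a) = p ^ a := by
    rw [← Nat.card_eq_fintype_card]; exact GaloisField.card p a ha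
  exact aux_main s d hs hps hd (by rw [hcard]; exact hgcd) x hx
end
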